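/- The figure-eight knot is ambient isotopic to its mirror image; that is, the figure-eight knot is amphicheiral. -/

import Mathlib

/-- Two subsets of `ℝ³` are ambient isotopic if there is a continuous family of
homeomorphisms of `ℝ³`, starting at the identity, carrying the first set onto the second. -/
def AmbientIsotopic (A B : Set (Fin 3 → ℝ)) : Prop :=
  ∃ F : ℝ → (Fin 3 → ℝ) → (Fin 3 → ℝ),
    Continuous (fun p : ℝ × (Fin 3 → ℝ) => F p.1 p.2) ∧
    (∀ t : ℝ, IsHomeomorph (F t)) ∧
    F 0 = id ∧ F 1 '' A = B

/-- A parametrization of the figure-eight knot in `ℝ³`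
(the (2,4)-pattern curve on a torus, i.e. the unique knot with a 4-crossing diagram). -/
noncomputable def figureEight (t : ℝ) : Fin 3 → ℝ :=
  ![(2 + Real.cos (2 * t)) * Real.cos (3 * t),
    (2 + Real.cos (2 * t)) * Real.sin (3 * t),
    Real.sin (4 * t)]

/-- The mirror reflection of `ℝ³` in the plane of the first two coordinates. -/
def mirror (p : Fin 3 → ℝ) : Fin 3 → ℝ := ![p 0, p 1, -(p 2)]

/- ### Auxiliary construction -/

lemma vec3_eq {f g : Fin 3 → ℝ} (h0 : f 0 = g 0) (h1 : f 1 = g 1) (h2 : f 2 = g 2) : f = g := by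
  funext i; fin_cases i; exacts [h0, h1, h2]

/-- radial cutoff -/
noncomputable def lam (u : ℝ) : ℝ := min 1 (max 0 (7 - 4*u))

/-- distance to the z-axis -/
noncomputable def rr (p : Fin 3 → ℝ) : ℝ := Real.sqrt ((p 0)^2 + (p 1)^2)

/-- distance to the core circle {x²+y²=4, z=0} -/
noncomputable def rho (p : Fin 3 → ℝ) : ℝ := Real.sqrt ((rr p - 2)^2 + (p 2)^2)

/-- twist angle -/
noncomputable def beta (s : ℝ) (p : Fin 3 → ℝ) : ℝ := Real.pi * s * lam (rho p)

/-- radial displacement -/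
noncomputable def dd (s : ℝ) (p : Fin 3 → ℝ) : ℝ :=
  (rr p - 2) * (Real.cos (beta s p) - 1) - p 2 * Real.sin (beta s p)

/-- the meridian twist map: rotation by `beta s p` of the meridian half-planes
around the core circle, damped off away from the core -/
noncomputable def tw (s : ℝ) (p : Fin 3 → ℝ) : Fin 3 → ℝ :=
  ![p 0 + p 0 * dd s p / max (rr p) (1/10),
    p 1 + p 1 * dd s p / max (rr p) (1/10),
    (rr p - 2) * Real.sin (beta s p) + p 2 * Real.cos (beta s p)]

/-- rotation about the z-axis -/
noncomputable def rotZ (θ : ℝ) (p : Fin 3 → ℝ) : Fin 3 → ℝ :=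
  ![p 0 * Real.cos θ - p 1 * Real.sin θ,
    p 0 * Real.sin θ + p 1 * Real.cos θ, p 2]

/-- the ambient isotopy -/
noncomputable def FF (s : ℝ) (p : Fin 3 → ℝ) : Fin 3 → ℝ := rotZ (3*Real.pi/2*s) (tw s p)

lemma tw_apply0 (s : ℝ) (p : Fin 3 → ℝ) :
    tw s p 0 = p 0 + p 0 * dd s p / max (rr p) (1/10) := rfl
lemma tw_apply1 (s : ℝ) (p : Fin 3 → ℝ) :
    tw s p 1 = p 1 + p 1 * dd s p / max (rr p) (1/10) := rfl
lemma tw_apply2 (s : ℝ) (p : Fin 3 → ℝ) :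
    tw s p 2 = (rr p - 2) * Real.sin (beta s p) + p 2 * Real.cos (beta s p) := rfl

lemma rotZ_apply0 (θ : ℝ) (p : Fin 3 → ℝ) :
    rotZ θ p 0 = p 0 * Real.cos θ - p 1 * Real.sin θ := rfl
lemma rotZ_apply1 (θ : ℝ) (p : Fin 3 → ℝ) :
    rotZ θ p 1 = p 0 * Real.sin θ + p 1 * Real.cos θ := rfl
lemma rotZ_apply2 (θ : ℝ) (p : Fin 3 → ℝ) : rotZ θ p 2 = p 2 := rfl

lemma lam_eq_zero {u : ℝ} (h : 7/4 ≤ u) : lam u = 0 := by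
  unfold lam
  rw [max_eq_left (by linarith), min_eq_right (by norm_num)]

lemma rho_nonneg (p : Fin 3 → ℝ) : 0 ≤ rho p := Real.sqrt_nonneg _

lemma rr_nonneg (p : Fin 3 → ℝ) : 0 ≤ rr p := Real.sqrt_nonneg _

lemma rho_sq (p : Fin 3 → ℝ) : (rho p)^2 = (rr p - 2)^2 + (p 2)^2 :=
  Real.sq_sqrt (by positivity)

lemma rr_sq (p : Fin 3 → ℝ) : (rr p)^2 = (p 0)^2 + (p 1)^2 :=
  Real.sq_sqrt (by positivity)

lemma rho_lt_of_lam_ne {p : Fin 3 → ℝ} (h : lam (rho p) ≠ 0) : rho p < 7/4 := by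
  by_contra hc
  exact h (lam_eq_zero (by linarith))

lemma rr_gt_of_rho_lt {p : Fin 3 → ℝ} (h : rho p < 7/4) : 1/4 < rr p := by
  have h1 := rho_sq p
  have h2 := rho_nonneg p
  have h3 := rr_nonneg p
  nlinarith [sq_nonneg (p 2)]

lemma tw_of_beta_eq_zero {s : ℝ} {p : Fin 3 → ℝ} (hb : beta s p = 0) : tw s p = p := by
  refine vec3_eq ?_ ?_ ?_
  · rw [tw_apply0, dd, hb, Real.cos_zero, Real.sin_zero]
    ring_nf
  · rw [tw_apply1, dd, hb, Real.cos_zero, Real.sin_zero]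
    ring_nf
  · rw [tw_apply2, hb, Real.cos_zero, Real.sin_zero]
    ring

lemma tw_of_lam_eq_zero {p : Fin 3 → ℝ} (h : lam (rho p) = 0) (s : ℝ) : tw s p = p :=
  tw_of_beta_eq_zero (by unfold beta; rw [h, mul_zero])

lemma tw_zero (p : Fin 3 → ℝ) : tw 0 p = p :=
  tw_of_beta_eq_zero (by unfold beta; ring)

lemma tw_tw (s : ℝ) (p : Fin 3 → ℝ) : tw (-s) (tw s p) = p := by
  by_cases h : lam (rho p) = 0
  · rw [tw_of_lam_eq_zero h s, tw_of_lam_eq_zero h (-s)]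
  · have hρ : rho p < 7/4 := rho_lt_of_lam_ne h
    have hr : 1/4 < rr p := rr_gt_of_rho_lt hρ
    have hr0 : rr p ≠ 0 := by linarith
    have hm : max (rr p) (1/10 : ℝ) = rr p := max_eq_left (by linarith)
    have hcs : Real.sin (beta s p) ^ 2 + Real.cos (beta s p) ^ 2 = 1 :=
      Real.sin_sq_add_cos_sq (beta s p)
    -- abbreviations (plain defs, no `set`)
    obtain ⟨r, hrdef⟩ : ∃ r, rr p = r := ⟨_, rfl⟩
    obtain ⟨z, hzdef⟩ : ∃ z, p 2 = z := ⟨_, rfl⟩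
    obtain ⟨c, hcdef⟩ : ∃ c, Real.cos (beta s p) = c := ⟨_, rfl⟩
    obtain ⟨s', hsdef⟩ : ∃ s', Real.sin (beta s p) = s' := ⟨_, rfl⟩
    rw [hrdef] at hr hr0 hm
    rw [hcdef, hsdef] at hcs
    have hρsq : (rho p)^2 = (r - 2)^2 + z^2 := by rw [rho_sq, hrdef, hzdef]
    have hρ0 : 0 ≤ rho p := rho_nonneg p
    have hu2 : ((r-2)*c - z*s')^2 + ((r-2)*s' + z*c)^2 = (r-2)^2 + z^2 := by
      linear_combination ((r-2)^2 + z^2) * hcs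
    have hupos : 1/4 < 2 + ((r-2)*c - z*s') := by nlinarith [sq_nonneg ((r-2)*s' + z*c)]
    have hu0 : (2:ℝ) + ((r-2)*c - z*s') ≠ 0 := by linarith
    have hdd : dd s p = (r - 2) * (c - 1) - z * s' := by
      rw [dd, hrdef, hzdef, hcdef, hsdef]
    have h0 : tw s p 0 = p 0 * (2 + ((r-2)*c - z*s')) / r := by
      rw [tw_apply0, hdd, hrdef, hm]
      field_simp
      ring
    have h1 : tw s p 1 = p 1 * (2 + ((r-2)*c - z*s')) / r := by
      rw [tw_apply1, hdd, hrdef, hm]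
      field_simp
      ring
    have h2 : tw s p 2 = (r-2)*s' + z*c := by
      rw [tw_apply2, hrdef, hzdef, hcdef, hsdef]
    have hxy : (p 0)^2 + (p 1)^2 = r^2 := by rw [← rr_sq, hrdef]
    have hrr' : rr (tw s p) = 2 + ((r-2)*c - z*s') := by
      rw [rr, h0, h1]
      have he : (p 0 * (2 + ((r-2)*c - z*s')) / r)^2
          + (p 1 * (2 + ((r-2)*c - z*s')) / r)^2 = (2 + ((r-2)*c - z*s'))^2 := by
        field_simp
        linear_combination hxy
      rw [he, Real.sqrt_sq (by linarith)]
    have hρ' : rho (tw s p) = rho p := by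
      rw [rho, hrr', h2]
      have he : (2 + ((r-2)*c - z*s') - 2)^2 + ((r-2)*s' + z*c)^2 = (r - 2)^2 + z^2 := by
        linear_combination hu2
      rw [he, ← hρsq, Real.sqrt_sq hρ0]
    have hβ' : beta (-s) (tw s p) = -(beta s p) := by
      rw [beta, beta, hρ']
      ring
    have hcos' : Real.cos (beta (-s) (tw s p)) = c := by rw [hβ', Real.cos_neg, hcdef]
    have hsin' : Real.sin (beta (-s) (tw s p)) = -s' := by rw [hβ', Real.sin_neg, hsdef]
    have hm' : max (rr (tw s p)) (1/10 : ℝ) = 2 + ((r-2)*c - z*s') := by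
      rw [hrr']; exact max_eq_left (by linarith)
    have hdd' : dd (-s) (tw s p) = ((r-2)*c - z*s') * (c - 1) + ((r-2)*s' + z*c) * s' := by
      rw [dd, hrr', h2, hcos', hsin']
      ring
    have huv : ((r-2)*c - z*s')*c + ((r-2)*s' + z*c)*s' = r - 2 := by
      linear_combination (r-2)*hcs
    refine vec3_eq ?_ ?_ ?_
    · rw [tw_apply0, hdd', hm', h0]
      have e1 : p 0 * (2 + ((r-2)*c - z*s')) / r *
          (((r-2)*c - z*s') * (c - 1) + ((r-2)*s' + z*c) * s') / (2 + ((r-2)*c - z*s'))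
          = p 0 * (((r-2)*c - z*s') * (c - 1) + ((r-2)*s' + z*c) * s') / r := by
        field_simp
      rw [e1, ← add_div]
      field_simp
      linear_combination (p 0 * (r-2)) * hcs
    · rw [tw_apply1, hdd', hm', h1]
      have e1 : p 1 * (2 + ((r-2)*c - z*s')) / r *
          (((r-2)*c - z*s') * (c - 1) + ((r-2)*s' + z*c) * s') / (2 + ((r-2)*c - z*s'))
          = p 1 * (((r-2)*c - z*s') * (c - 1) + ((r-2)*s' + z*c) * s') / r := by
        field_simp
      rw [e1, ← add_div]
      field_simp
      linear_combination (p 1 * (r-2)) * hcs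
    · rw [tw_apply2, hrr', h2, hcos', hsin', hzdef]
      linear_combination z * hcs

lemma rotZ_rotZ (θ : ℝ) (p : Fin 3 → ℝ) : rotZ (-θ) (rotZ θ p) = p := by
  have hcs := Real.sin_sq_add_cos_sq θ
  refine vec3_eq ?_ ?_ ?_
  · rw [rotZ_apply0, rotZ_apply0, rotZ_apply1, Real.cos_neg, Real.sin_neg]
    linear_combination p 0 * hcs
  · rw [rotZ_apply1, rotZ_apply0, rotZ_apply1, Real.cos_neg, Real.sin_neg]
    linear_combination p 1 * hcs
  · rfl

lemma cont_rr : Continuous rr := by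
  unfold rr
  exact Real.continuous_sqrt.comp (((continuous_apply 0).pow 2).add ((continuous_apply 1).pow 2))

lemma cont_rho : Continuous rho := by
  unfold rho
  exact Real.continuous_sqrt.comp
    (((cont_rr.sub continuous_const).pow 2).add ((continuous_apply 2).pow 2))

lemma cont_lam : Continuous lam := by
  unfold lam
  exact continuous_const.min (continuous_const.max
    (continuous_const.sub (continuous_const.mul continuous_id)))

lemma cont_beta : Continuous (fun q : ℝ × (Fin 3 → ℝ) => beta q.1 q.2) := by
  unfold beta
  exact (continuous_const.mul continuous_fst).mul ((cont_lam.comp cont_rho).comp continuous_snd)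

lemma cont_dd : Continuous (fun q : ℝ × (Fin 3 → ℝ) => dd q.1 q.2) := by
  unfold dd
  exact (((cont_rr.comp continuous_snd).sub continuous_const).mul
      ((Real.continuous_cos.comp cont_beta).sub continuous_const)).sub
    (((continuous_apply 2).comp continuous_snd).mul (Real.continuous_sin.comp cont_beta))

lemma max_ne_zero (p : Fin 3 → ℝ) : max (rr p) (1/10 : ℝ) ≠ 0 :=
  ne_of_gt (lt_of_lt_of_le (by norm_num) (le_max_right _ _))

lemma cont_tw : Continuous (fun q : ℝ × (Fin 3 → ℝ) => tw q.1 q.2) := by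
  have hden : Continuous (fun q : ℝ × (Fin 3 → ℝ) => max (rr q.2) (1/10 : ℝ)) :=
    (cont_rr.comp continuous_snd).max continuous_const
  apply continuous_pi
  intro i
  fin_cases i
  · show Continuous (fun q : ℝ × (Fin 3 → ℝ) => tw q.1 q.2 0)
    simp only [tw_apply0]
    exact ((continuous_apply 0).comp continuous_snd).add
      ((((continuous_apply 0).comp continuous_snd).mul cont_dd).div hden
        (fun q => max_ne_zero _))
  · show Continuous (fun q : ℝ × (Fin 3 → ℝ) => tw q.1 q.2 1)
    simp only [tw_apply1]
    exact ((continuous_apply 1).comp continuous_snd).add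
      ((((continuous_apply 1).comp continuous_snd).mul cont_dd).div hden
        (fun q => max_ne_zero _))
  · show Continuous (fun q : ℝ × (Fin 3 → ℝ) => tw q.1 q.2 2)
    simp only [tw_apply2]
    exact (((cont_rr.comp continuous_snd).sub continuous_const).mul
        (Real.continuous_sin.comp cont_beta)).add
      (((continuous_apply 2).comp continuous_snd).mul (Real.continuous_cos.comp cont_beta))

lemma cont_FF : Continuous (fun q : ℝ × (Fin 3 → ℝ) => FF q.1 q.2) := by
  have htw : ∀ j : Fin 3, Continuous (fun q : ℝ × (Fin 3 → ℝ) => tw q.1 q.2 j) :=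
    fun j => (continuous_apply j).comp cont_tw
  have hθc : Continuous (fun q : ℝ × (Fin 3 → ℝ) => Real.cos (3*Real.pi/2*q.1)) :=
    Real.continuous_cos.comp (continuous_const.mul continuous_fst)
  have hθs : Continuous (fun q : ℝ × (Fin 3 → ℝ) => Real.sin (3*Real.pi/2*q.1)) :=
    Real.continuous_sin.comp (continuous_const.mul continuous_fst)
  apply continuous_pi
  intro i
  fin_cases i
  · show Continuous (fun q : ℝ × (Fin 3 → ℝ) => FF q.1 q.2 0)
    simp only [FF, rotZ_apply0]
    exact ((htw 0).mul hθc).sub ((htw 1).mul hθs)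
  · show Continuous (fun q : ℝ × (Fin 3 → ℝ) => FF q.1 q.2 1)
    simp only [FF, rotZ_apply1]
    exact ((htw 0).mul hθs).add ((htw 1).mul hθc)
  · show Continuous (fun q : ℝ × (Fin 3 → ℝ) => FF q.1 q.2 2)
    simp only [FF, rotZ_apply2]
    exact htw 2

noncomputable def twH (s : ℝ) : (Fin 3 → ℝ) ≃ₜ (Fin 3 → ℝ) where
  toFun := tw s
  invFun := tw (-s)
  left_inv := fun p => tw_tw s p
  right_inv := fun p => by have := tw_tw (-s) p; rwa [neg_neg] at this
  continuous_toFun := cont_tw.comp (continuous_const.prodMk continuous_id)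
  continuous_invFun := cont_tw.comp (continuous_const.prodMk continuous_id)

noncomputable def rotZH (θ : ℝ) : (Fin 3 → ℝ) ≃ₜ (Fin 3 → ℝ) where
  toFun := rotZ θ
  invFun := rotZ (-θ)
  left_inv := fun p => rotZ_rotZ θ p
  right_inv := fun p => by have := rotZ_rotZ (-θ) p; rwa [neg_neg] at this
  continuous_toFun := by
    apply continuous_pi
    intro i
    fin_cases i
    · show Continuous (fun p : Fin 3 → ℝ => rotZ θ p 0)
      simp only [rotZ_apply0]
      exact ((continuous_apply 0).mul continuous_const).sub
        ((continuous_apply 1).mul continuous_const)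
    · show Continuous (fun p : Fin 3 → ℝ => rotZ θ p 1)
      simp only [rotZ_apply1]
      exact ((continuous_apply 0).mul continuous_const).add
        ((continuous_apply 1).mul continuous_const)
    · show Continuous (fun p : Fin 3 → ℝ => rotZ θ p 2)
      simp only [rotZ_apply2]
      exact continuous_apply 2
  continuous_invFun := by
    apply continuous_pi
    intro i
    fin_cases i
    · show Continuous (fun p : Fin 3 → ℝ => rotZ (-θ) p 0)
      simp only [rotZ_apply0]
      exact ((continuous_apply 0).mul continuous_const).sub
        ((continuous_apply 1).mul continuous_const)
    · show Continuous (fun p : Fin 3 → ℝ => rotZ (-θ) p 1)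
      simp only [rotZ_apply1]
      exact ((continuous_apply 0).mul continuous_const).add
        ((continuous_apply 1).mul continuous_const)
    · show Continuous (fun p : Fin 3 → ℝ => rotZ (-θ) p 2)
      simp only [rotZ_apply2]
      exact continuous_apply 2

lemma FF_isHom (s : ℝ) : IsHomeomorph (FF s) := by
  have h : FF s = rotZ (3*Real.pi/2*s) ∘ tw s := rfl
  rw [h]
  exact (rotZH (3*Real.pi/2*s)).isHomeomorph.comp (twH s).isHomeomorph

lemma FF_zero : FF 0 = id := by
  funext p
  show rotZ (3*Real.pi/2*0) (tw 0 p) = p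
  rw [tw_zero, show 3*Real.pi/2*0 = 0 by ring]
  refine vec3_eq ?_ ?_ ?_
  · rw [rotZ_apply0, Real.cos_zero, Real.sin_zero]; ring
  · rw [rotZ_apply1, Real.cos_zero, Real.sin_zero]; ring
  · rfl

lemma cos_three_pi_div_two : Real.cos (3*Real.pi/2) = 0 := by
  rw [show 3*Real.pi/2 = Real.pi + Real.pi/2 by ring, Real.cos_add, Real.cos_pi,
    Real.sin_pi, Real.cos_pi_div_two, Real.sin_pi_div_two]
  ring

lemma sin_three_pi_div_two : Real.sin (3*Real.pi/2) = -1 := by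
  rw [show 3*Real.pi/2 = Real.pi + Real.pi/2 by ring, Real.sin_add, Real.cos_pi,
    Real.sin_pi, Real.cos_pi_div_two, Real.sin_pi_div_two]
  ring

lemma fE_apply0 (t : ℝ) : figureEight t 0 = (2 + Real.cos (2*t)) * Real.cos (3*t) := rfl
lemma fE_apply1 (t : ℝ) : figureEight t 1 = (2 + Real.cos (2*t)) * Real.sin (3*t) := rfl
lemma fE_apply2 (t : ℝ) : figureEight t 2 = Real.sin (4*t) := rfl
lemma mirror_apply0 (p : Fin 3 → ℝ) : mirror p 0 = p 0 := rfl
lemma mirror_apply1 (p : Fin 3 → ℝ) : mirror p 1 = p 1 := rfl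
lemma mirror_apply2 (p : Fin 3 → ℝ) : mirror p 2 = -(p 2) := rfl

lemma key (t : ℝ) : FF 1 (figureEight t) = mirror (figureEight (t + Real.pi/2)) := by
  obtain ⟨c2, hc2⟩ : ∃ c2, Real.cos (2*t) = c2 := ⟨_, rfl⟩
  obtain ⟨s3, hs3⟩ : ∃ s3, Real.sin (3*t) = s3 := ⟨_, rfl⟩
  obtain ⟨c3, hc3⟩ : ∃ c3, Real.cos (3*t) = c3 := ⟨_, rfl⟩
  obtain ⟨s4, hs4⟩ : ∃ s4, Real.sin (4*t) = s4 := ⟨_, rfl⟩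
  have hc2b : -1 ≤ c2 := hc2 ▸ Real.neg_one_le_cos (2*t)
  have hc2b' : c2 ≤ 1 := hc2 ▸ Real.cos_le_one (2*t)
  have h2c : (0:ℝ) < 2 + c2 := by linarith
  have h2c0 : (2:ℝ) + c2 ≠ 0 := ne_of_gt h2c
  have hcs3 : s3^2 + c3^2 = 1 := by rw [← hs3, ← hc3]; exact Real.sin_sq_add_cos_sq (3*t)
  have hs4b : s4^2 ≤ 1 := by
    rw [← hs4]
    nlinarith [Real.neg_one_le_sin (4*t), Real.sin_le_one (4*t)]
  have hc2sq : c2^2 ≤ 1 := by nlinarith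
  have hq0 : figureEight t 0 = (2 + c2) * c3 := by rw [fE_apply0, hc2, hc3]
  have hq1 : figureEight t 1 = (2 + c2) * s3 := by rw [fE_apply1, hc2, hs3]
  have hq2 : figureEight t 2 = s4 := by rw [fE_apply2, hs4]
  have hrrq : rr (figureEight t) = 2 + c2 := by
    rw [rr, hq0, hq1]
    have he : ((2+c2)*c3)^2 + ((2+c2)*s3)^2 = (2+c2)^2 := by
      linear_combination (2+c2)^2 * hcs3
    rw [he, Real.sqrt_sq (by linarith)]
  have hρq : rho (figureEight t) ≤ 3/2 := by
    rw [rho, hrrq, hq2]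
    have h1 : (2 + c2 - 2)^2 + s4^2 ≤ (3/2)^2 := by nlinarith
    calc Real.sqrt ((2 + c2 - 2)^2 + s4^2) ≤ Real.sqrt ((3/2)^2) := Real.sqrt_le_sqrt h1
      _ = 3/2 := Real.sqrt_sq (by norm_num)
  have hlam : lam (rho (figureEight t)) = 1 := by
    rw [lam, max_eq_right (by linarith [rho_nonneg (figureEight t)] :
      (0:ℝ) ≤ 7 - 4 * rho (figureEight t)), min_eq_left (by linarith)]
  have hβ : beta 1 (figureEight t) = Real.pi := by rw [beta, hlam]; ring
  have hcosβ : Real.cos (beta 1 (figureEight t)) = -1 := by rw [hβ]; exact Real.cos_pi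
  have hsinβ : Real.sin (beta 1 (figureEight t)) = 0 := by rw [hβ]; exact Real.sin_pi
  have hdd : dd 1 (figureEight t) = -2*c2 := by
    rw [dd, hrrq, hq2, hcosβ, hsinβ]
    ring
  have hmq : max (rr (figureEight t)) (1/10 : ℝ) = 2 + c2 := by
    rw [hrrq]; exact max_eq_left (by linarith)
  have htw0 : tw 1 (figureEight t) 0 = (2-c2)*c3 := by
    rw [tw_apply0, hdd, hmq, hq0]
    field_simp
    ring
  have htw1 : tw 1 (figureEight t) 1 = (2-c2)*s3 := by
    rw [tw_apply1, hdd, hmq, hq1]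
    field_simp
    ring
  have htw2 : tw 1 (figureEight t) 2 = -s4 := by
    rw [tw_apply2, hrrq, hq2, hcosβ, hsinβ]
    ring
  have hθ : 3*Real.pi/2*1 = 3*Real.pi/2 := by ring
  have hLc : Real.cos (3*Real.pi/2*1) = 0 := by rw [hθ]; exact cos_three_pi_div_two
  have hLs : Real.sin (3*Real.pi/2*1) = -1 := by rw [hθ]; exact sin_three_pi_div_two
  -- right-hand side trig
  have e2 : Real.cos (2*(t + Real.pi/2)) = -c2 := by
    rw [show 2*(t + Real.pi/2) = 2*t + Real.pi by ring, Real.cos_add_pi, hc2]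
  have e3c : Real.cos (3*(t + Real.pi/2)) = s3 := by
    rw [show 3*(t + Real.pi/2) = 3*t + 3*Real.pi/2 by ring, Real.cos_add,
      cos_three_pi_div_two, sin_three_pi_div_two, hc3, hs3]
    ring
  have e3s : Real.sin (3*(t + Real.pi/2)) = -c3 := by
    rw [show 3*(t + Real.pi/2) = 3*t + 3*Real.pi/2 by ring, Real.sin_add,
      cos_three_pi_div_two, sin_three_pi_div_two, hc3, hs3]
    ring
  have e4 : Real.sin (4*(t + Real.pi/2)) = s4 := by
    rw [show 4*(t + Real.pi/2) = 4*t + 2*Real.pi by ring, Real.sin_add_two_pi, hs4]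
  refine vec3_eq ?_ ?_ ?_
  · show rotZ (3*Real.pi/2*1) (tw 1 (figureEight t)) 0 = _
    rw [rotZ_apply0, htw0, htw1, hLc, hLs, mirror_apply0, fE_apply0, e2, e3c]
    ring
  · show rotZ (3*Real.pi/2*1) (tw 1 (figureEight t)) 1 = _
    rw [rotZ_apply1, htw0, htw1, hLc, hLs, mirror_apply1, fE_apply1, e2, e3s]
    ring
  · show rotZ (3*Real.pi/2*1) (tw 1 (figureEight t)) 2 = _
    rw [rotZ_apply2, htw2, mirror_apply2, fE_apply2, e4]

/-- Listing: the figure-eight knot is ambient isotopic to its mirror image;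
that is, the figure-eight knot is amphicheiral. -/
theorem figureEight_amphicheiral :
    AmbientIsotopic (Set.range figureEight) (mirror '' Set.range figureEight) := by
  refine ⟨FF, cont_FF, FF_isHom, FF_zero, ?_⟩
  ext w
  constructor
  · rintro ⟨-, ⟨t, rfl⟩, rfl⟩
    exact ⟨figureEight (t + Real.pi/2), ⟨t + Real.pi/2, rfl⟩, (key t).symm⟩
  · rintro ⟨-, ⟨t, rfl⟩, rfl⟩
    refine ⟨figureEight (t - Real.pi/2), ⟨t - Real.pi/2, rfl⟩, ?_⟩
    rw [key (t - Real.pi/2), show t - Real.pi/2 + Real.pi/2 = t from by ring]
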